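/- arXiv:1008.1298 — 8 statements merged into one kernel-verified Lean document; each statement's English description precedes it below -/
import Mathlib

section
/- With β₀ = ȳ − β₁x̄ substituted, the critical points in β₁ of SSE_o(β₁, λ) = ((1−λ)²S_yy/β₁² + λ²S_xx)(S_yy − 2β₁S_xy + β₁²S_xx) are exactly the roots of the quartic P₄(β₁) = λ²√(S_xx/S_yy)·(S_xx/S_yy)·β₁⁴ − λ²(S_xx/S_yy)ρβ₁³ + (1−λ)²ρβ₁ − (1−λ)²√(S_yy/S_xx), where ρ = S_xy/√(S_xxS_yy); i.e., ∂SSE_o/∂β₁ = 0 iff P₄(β₁) = 0 for β₁ ≠ 0. -/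
/-- With `β₀ = ȳ − β₁x̄` substituted, the critical points in `β₁` of
`SSE_o(β₁,λ) = ((1−λ)²S_yy/β₁² + λ²S_xx)(S_yy − 2β₁S_xy + β₁²S_xx)` are exactly the
roots of the quartic `P₄`: for `β₁ ≠ 0`, `∂SSE_o/∂β₁ = 0 ↔ P₄(β₁) = 0`. -/
theorem critical_points_iff_quartic_roots
    (Sxx Syy Sxy : ℝ) (hSxx : 0 < Sxx) (hSyy : 0 < Syy)
    (l : ℝ) (hl : l ∈ Set.Ioo (0 : ℝ) 1)
    (ρ : ℝ) (hρ : ρ = Sxy / Real.sqrt (Sxx * Syy))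
    (SSEo P₄ : ℝ → ℝ)
    (hSSEo : ∀ b : ℝ, SSEo b =
      ((1 - l) ^ 2 * Syy / b ^ 2 + l ^ 2 * Sxx) * (Syy - 2 * b * Sxy + b ^ 2 * Sxx))
    (hP₄ : ∀ b : ℝ, P₄ b =
      l ^ 2 * Real.sqrt (Sxx / Syy) * (Sxx / Syy) * b ^ 4
        - l ^ 2 * (Sxx / Syy) * ρ * b ^ 3
        + (1 - l) ^ 2 * ρ * b
        - (1 - l) ^ 2 * Real.sqrt (Syy / Sxx)) :
    ∀ β₁ : ℝ, β₁ ≠ 0 → (deriv SSEo β₁ = 0 ↔ P₄ β₁ = 0) := by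
  obtain ⟨hl0, hl1⟩ := hl
  intro β₁ hb
  set sx := Real.sqrt Sxx with hsx
  set sy := Real.sqrt Syy with hsy
  have hsx0 : 0 < sx := Real.sqrt_pos.mpr hSxx
  have hsy0 : 0 < sy := Real.sqrt_pos.mpr hSyy
  have hsx2 : sx ^ 2 = Sxx := Real.sq_sqrt hSxx.le
  have hsy2 : sy ^ 2 = Syy := Real.sq_sqrt hSyy.le
  have hmul : Real.sqrt (Sxx * Syy) = sx * sy := Real.sqrt_mul hSxx.le _
  have hdiv1 : Real.sqrt (Sxx / Syy) = sx / sy := Real.sqrt_div hSxx.le _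
  have hdiv2 : Real.sqrt (Syy / Sxx) = sy / sx := Real.sqrt_div hSyy.le _
  have hSxy : Sxy = ρ * (sx * sy) := by
    rw [hρ, hmul]; field_simp
  have hfun : SSEo = fun b => ((1 - l) ^ 2 * Syy / b ^ 2 + l ^ 2 * Sxx) *
      (Syy - 2 * b * Sxy + b ^ 2 * Sxx) := funext hSSEo
  have h1 : HasDerivAt (fun b : ℝ => (1 - l) ^ 2 * Syy / b ^ 2 + l ^ 2 * Sxx)
      (-2 * ((1 - l) ^ 2 * Syy) / β₁ ^ 3) β₁ := by
    have hp : HasDerivAt (fun b : ℝ => b ^ 2) (2 * β₁) β₁ := by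
      simpa using hasDerivAt_pow 2 β₁
    have hdv := ((hasDerivAt_const β₁ ((1 - l) ^ 2 * Syy)).div hp
      (pow_ne_zero 2 hb)).add_const (l ^ 2 * Sxx)
    apply hdv.congr_deriv
    field_simp
    ring
  have h2 : HasDerivAt (fun b : ℝ => Syy - 2 * b * Sxy + b ^ 2 * Sxx)
      (-2 * Sxy + 2 * β₁ * Sxx) β₁ := by
    have hdv := ((((hasDerivAt_id β₁).const_mul 2).mul_const Sxy).const_sub Syy).add
      ((hasDerivAt_pow 2 β₁).mul_const Sxx)
    apply hdv.congr_deriv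
    ring
  have hd : HasDerivAt SSEo
      ((-2 * ((1 - l) ^ 2 * Syy) / β₁ ^ 3) * (Syy - 2 * β₁ * Sxy + β₁ ^ 2 * Sxx)
        + ((1 - l) ^ 2 * Syy / β₁ ^ 2 + l ^ 2 * Sxx) * (-2 * Sxy + 2 * β₁ * Sxx)) β₁ := by
    rw [hfun]; exact h1.mul h2
  have key : deriv SSEo β₁ = 2 * sx * sy ^ 3 / β₁ ^ 3 * P₄ β₁ := by
    rw [hd.deriv, hP₄, hρ, hmul, hdiv1, hdiv2, hSxy, hρ, hmul, ← hsx2, ← hsy2]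
    field_simp
    ring
  rw [key, mul_eq_zero]
  have hne : 2 * sx * sy ^ 3 / β₁ ^ 3 ≠ 0 := by positivity
  tauto
end

section
/- For λ ∈ (0,1) and S_xy > 0, the quartic P₄(β₁) = λ²√(S_xx/S_yy)(S_xx/S_yy)β₁⁴ − λ²(S_xx/S_yy)ρβ₁³ + (1−λ)²ρβ₁ − (1−λ)²√(S_yy/S_xx) has exactly two real roots, one positive and one negative. -/
set_option maxHeartbeats 1000000 in
private lemma quartic_aux (ρ l : ℝ) (hρ0 : 0 < ρ) (hρ1 : ρ ≤ 1)
    (hl0 : 0 < l) (hl1 : l < 1) :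
    ∃ t₁ t₂ : ℝ, t₁ < 0 ∧ 0 < t₂ ∧
      (l^2 * t₁^4 - l^2 * ρ * t₁^3 + (1-l)^2 * ρ * t₁ - (1-l)^2 = 0) ∧
      (l^2 * t₂^4 - l^2 * ρ * t₂^3 + (1-l)^2 * ρ * t₂ - (1-l)^2 = 0) ∧
      ∀ t : ℝ, l^2 * t^4 - l^2 * ρ * t^3 + (1-l)^2 * ρ * t - (1-l)^2 = 0 →
        t = t₁ ∨ t = t₂ := by
  set Q : ℝ → ℝ := fun t => l^2 * t^4 - l^2 * ρ * t^3 + (1-l)^2 * ρ * t - (1-l)^2 with hQdef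
  have hl2 : (0:ℝ) < l^2 := by positivity
  have h1l : (0:ℝ) < (1-l)^2 := pow_pos (by linarith) 2
  have hQcont : Continuous Q := by fun_prop
  have hQ0 : Q 0 < 0 := by
    have h : Q 0 = -(1-l)^2 := by simp [hQdef]
    rw [h]; linarith
  -- derivative data
  have hderiv : ∀ x : ℝ, HasDerivAt Q (4*l^2*x^3 - 3*l^2*ρ*x^2 + (1-l)^2*ρ) x := by
    intro x
    have h1 : HasDerivAt (fun t : ℝ => l^2 * t^4) (l^2 * (4*x^3)) x :=
      (hasDerivAt_pow 4 x).const_mul (l^2) |>.congr_deriv (by ring)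
    have h2 : HasDerivAt (fun t : ℝ => l^2 * ρ * t^3) (l^2 * ρ * (3*x^2)) x :=
      (hasDerivAt_pow 3 x).const_mul (l^2*ρ) |>.congr_deriv (by ring)
    have h3 : HasDerivAt (fun t : ℝ => (1-l)^2 * ρ * t) ((1-l)^2 * ρ) x :=
      (hasDerivAt_id x).const_mul ((1-l)^2*ρ) |>.congr_deriv (by ring)
    have := ((h1.sub h2).add h3).sub_const ((1-l)^2)
    exact this.congr_deriv (by ring)
  set Q' : ℝ → ℝ := fun x => 4*l^2*x^3 - 3*l^2*ρ*x^2 + (1-l)^2*ρ with hQ'def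
  have hderivQ : deriv Q = Q' := funext fun x => (hderiv x).deriv
  have hderiv2 : ∀ x : ℝ, HasDerivAt Q' (12*l^2*x^2 - 6*l^2*ρ*x) x := by
    intro x
    have h1 : HasDerivAt (fun t : ℝ => 4*l^2 * t^3) (4*l^2 * (3*x^2)) x :=
      (hasDerivAt_pow 3 x).const_mul (4*l^2) |>.congr_deriv (by ring)
    have h2 : HasDerivAt (fun t : ℝ => 3*l^2*ρ * t^2) (3*l^2*ρ * (2*x^1)) x :=
      (hasDerivAt_pow 2 x).const_mul (3*l^2*ρ) |>.congr_deriv (by ring)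
    exact ((h1.sub h2).add_const ((1-l)^2*ρ)).congr_deriv (by ring)
  -- Q is negative on (0, ρ)
  have hneg : ∀ t : ℝ, 0 < t → t < ρ → Q t < 0 := by
    intro t ht0 htρ
    have h1 : 0 < t^3 * (ρ - t) := mul_pos (pow_pos ht0 3) (sub_pos.mpr htρ)
    have h2 : ρ * t < 1 := by nlinarith
    simp only [hQdef]
    nlinarith [mul_pos hl2 h1, mul_pos h1l (sub_pos.mpr h2)]
  have hQρ : Q ρ ≤ 0 := by
    simp only [hQdef]
    nlinarith [mul_nonneg h1l.le (by nlinarith : (0:ℝ) ≤ 1 - ρ^2)]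
  -- strictly monotone on [ρ, ∞)
  have hmono : StrictMonoOn Q (Set.Ici ρ) := by
    apply strictMonoOn_of_deriv_pos (convex_Ici ρ) hQcont.continuousOn
    intro x hx
    rw [interior_Ici] at hx
    rw [hderivQ]
    show (0:ℝ) < 4*l^2*x^3 - 3*l^2*ρ*x^2 + (1-l)^2*ρ
    have hxρ : ρ < x := hx
    have hx0 : 0 < x := hρ0.trans hxρ
    nlinarith [mul_pos h1l hρ0,
      mul_pos (mul_pos hl2 (mul_pos hx0 hx0)) (by linarith : (0:ℝ) < 4*x - 3*ρ)]
  -- strictly convex on (-∞, 0]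
  have hconv : StrictConvexOn ℝ (Set.Iic (0:ℝ)) Q := by
    apply strictConvexOn_of_deriv2_pos (convex_Iic 0) hQcont.continuousOn
    intro x hx
    rw [interior_Iic] at hx
    have : deriv^[2] Q x = 12*l^2*x^2 - 6*l^2*ρ*x := by
      rw [Function.iterate_succ, Function.iterate_one, Function.comp_apply, hderivQ]
      exact (hderiv2 x).deriv
    rw [this]
    have hx0 : x < 0 := hx
    nlinarith [mul_pos hl2 (mul_pos (neg_pos.mpr hx0) (neg_pos.mpr hx0)),
      mul_pos (mul_pos hl2 hρ0) (neg_pos.mpr hx0)]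
  -- existence of positive root
  obtain ⟨T, hTρ, hQT⟩ : ∃ T : ℝ, ρ ≤ T ∧ 0 ≤ Q T := by
    refine ⟨max (1/ρ) (ρ+1), le_trans (by linarith) (le_max_right _ _), ?_⟩
    set T := max (1/ρ) (ρ+1) with hT
    have h1 : 1/ρ ≤ T := le_max_left _ _
    have h2 : ρ + 1 ≤ T := le_max_right _ _
    have hT0 : 0 < T := by nlinarith
    have hρT : 1 ≤ ρ * T := by
      rw [mul_comm]
      exact (div_le_iff₀ hρ0).mp h1
    have h3 : 0 < T^3 * (T - ρ) := mul_pos (pow_pos hT0 3) (by linarith)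
    simp only [hQdef]
    nlinarith [mul_pos hl2 h3, mul_nonneg h1l.le (sub_nonneg.mpr hρT)]
  obtain ⟨t₂, ht₂mem, ht₂⟩ : ∃ t₂ ∈ Set.Icc ρ T, Q t₂ = 0 := by
    have := intermediate_value_Icc hTρ hQcont.continuousOn (f := Q)
    have h0 : (0:ℝ) ∈ Set.Icc (Q ρ) (Q T) := ⟨hQρ, hQT⟩
    obtain ⟨t₂, ht₂mem, ht₂⟩ := this h0
    exact ⟨t₂, ht₂mem, ht₂⟩
  have ht₂pos : 0 < t₂ := lt_of_lt_of_le hρ0 ht₂mem.1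
  -- existence of negative root
  obtain ⟨T', hT'0, hQT'⟩ : ∃ T' : ℝ, T' < 0 ∧ 0 ≤ Q T' := by
    have hupos : (0:ℝ) < 1 + 2*(1-l)^2/l^2 := by positivity
    refine ⟨-(1 + 2*(1-l)^2/l^2), by linarith, ?_⟩
    set u := 1 + 2*(1-l)^2/l^2 with hu
    have hnn : (0:ℝ) ≤ 2*(1-l)^2/l^2 := by positivity
    have hu1 : 1 ≤ u := le_add_of_nonneg_right hnn
    have hu0 : 0 < u := hupos
    have hu2 : 2*(1-l)^2 ≤ l^2 * u := by
      have h : l^2 * u = l^2 + 2*(1-l)^2 := by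
        rw [hu]; field_simp
      nlinarith
    simp only [hQdef]
    have hA : u^2 ≤ u^4 := pow_le_pow_right₀ hu1 (by norm_num)
    have hB : 2*(1-l)^2 * u ≤ l^2 * u * u := mul_le_mul_of_nonneg_right hu2 hu0.le
    have hC : (1-l)^2*ρ*u ≤ (1-l)^2*u := by nlinarith [mul_nonneg h1l.le hu0.le]
    have hD : (1-l)^2 ≤ (1-l)^2*u := by nlinarith
    nlinarith [hB, hC, hD, mul_le_mul_of_nonneg_left hA hl2.le,
      mul_nonneg (mul_nonneg hl2.le hρ0.le) (pow_nonneg hu0.le 3)]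
  obtain ⟨t₁, ht₁mem, ht₁⟩ : ∃ t₁ ∈ Set.Icc T' 0, Q t₁ = 0 := by
    have := intermediate_value_Icc' (le_of_lt hT'0) hQcont.continuousOn (f := Q)
    have h0 : (0:ℝ) ∈ Set.Icc (Q 0) (Q T') := ⟨hQ0.le, hQT'⟩
    obtain ⟨t₁, ht₁mem, ht₁⟩ := this h0
    exact ⟨t₁, ht₁mem, ht₁⟩
  have ht₁neg : t₁ < 0 := by
    rcases lt_or_eq_of_le ht₁mem.2 with h | h
    · exact h
    · exfalso; rw [h] at ht₁; exact absurd ht₁ hQ0.ne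
  -- uniqueness of negative root
  have huniq_neg : ∀ r : ℝ, r < 0 → Q r = 0 → r = t₁ := by
    have key : ∀ r r' : ℝ, r < r' → r' < 0 → Q r = 0 → Q r' < 0 := by
      intro r r' hrr' hr'0 hQr
      have hr0 : r < 0 := hrr'.trans hr'0
      set a := r'/r with ha
      have ha0 : 0 < a := div_pos_iff.mpr (Or.inr ⟨hr'0, hr0⟩)
      have ha1 : a < 1 := by
        rw [ha, div_lt_one_of_neg hr0]
        exact hrr'
      have hcomb : a * r + (1-a) * 0 = r' := by
        rw [ha, mul_zero, add_zero, div_mul_cancel₀ _ hr0.ne]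
      have hb0 : (0:ℝ) < 1 - a := by linarith
      have hab : a + (1 - a) = 1 := by ring
      have := hconv.2 (Set.mem_Iic.mpr hr0.le) (Set.mem_Iic.mpr le_rfl)
        (by exact hr0.ne) ha0 hb0 hab
      rw [smul_eq_mul, smul_eq_mul, smul_eq_mul, smul_eq_mul, hcomb, hQr] at this
      nlinarith [mul_pos (sub_pos.mpr ha1) (neg_pos.mpr hQ0)]
    intro r hr0 hQr
    rcases lt_trichotomy r t₁ with h | h | h
    · exact absurd ht₁ (key r t₁ h ht₁neg hQr).ne
    · exact h
    · exact absurd hQr (key t₁ r h hr0 ht₁).ne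
  -- uniqueness of positive root
  have huniq_pos : ∀ r : ℝ, 0 < r → Q r = 0 → r = t₂ := by
    intro r hr0 hQr
    have hrρ : ρ ≤ r := by
      by_contra h
      push_neg at h
      exact absurd hQr (hneg r hr0 h).ne
    exact hmono.injOn (Set.mem_Ici.mpr hrρ) (Set.mem_Ici.mpr ht₂mem.1) (by rw [hQr, ht₂])
  refine ⟨t₁, t₂, ht₁neg, ht₂pos, ht₁, ht₂, ?_⟩
  intro t ht
  rcases lt_trichotomy t 0 with h | h | h
  · exact Or.inl (huniq_neg t h ht)
  · exfalso; rw [h] at ht; exact absurd ht hQ0.ne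
  · exact Or.inr (huniq_pos t h ht)

/-- For `λ ∈ (0,1)` and `S_xy > 0`, the quartic `P₄` has exactly two real
roots, one positive and one negative. -/
theorem quartic_exactly_two_real_roots
    (Sxx Syy Sxy : ℝ) (hSxx : 0 < Sxx) (hSyy : 0 < Syy) (hSxy : 0 < Sxy)
    (ρ : ℝ) (hρ : ρ = Sxy / Real.sqrt (Sxx * Syy)) (hρ1 : ρ ≤ 1)
    (l : ℝ) (hl : l ∈ Set.Ioo (0 : ℝ) 1)
    (P₄ : ℝ → ℝ)
    (hP₄ : ∀ b : ℝ, P₄ b =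
      l ^ 2 * Real.sqrt (Sxx / Syy) * (Sxx / Syy) * b ^ 4
        - l ^ 2 * (Sxx / Syy) * ρ * b ^ 3
        + (1 - l) ^ 2 * ρ * b
        - (1 - l) ^ 2 * Real.sqrt (Syy / Sxx)) :
    ∃ b₁ b₂ : ℝ, b₁ < 0 ∧ 0 < b₂ ∧ P₄ b₁ = 0 ∧ P₄ b₂ = 0 ∧
      ∀ b : ℝ, P₄ b = 0 → b = b₁ ∨ b = b₂ := by
  obtain ⟨hl0, hl1⟩ := hl
  have hρ0 : 0 < ρ := by
    rw [hρ]
    have : 0 < Real.sqrt (Sxx * Syy) := Real.sqrt_pos.mpr (by positivity)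
    positivity
  set s := Real.sqrt (Sxx / Syy) with hs
  have hs0 : 0 < s := Real.sqrt_pos.mpr (by positivity)
  have hs2 : s^2 = Sxx/Syy := Real.sq_sqrt (by positivity)
  have hinv : Real.sqrt (Syy/Sxx) = 1/s := by
    have h : Syy/Sxx = (Sxx/Syy)⁻¹ := by field_simp
    rw [h, Real.sqrt_inv, ← hs, one_div]
  have key : ∀ b : ℝ, P₄ b =
      (l^2 * (s*b)^4 - l^2 * ρ * (s*b)^3 + (1-l)^2 * ρ * (s*b) - (1-l)^2) / s := by
    intro b
    rw [hP₄, hinv, ← hs2]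
    field_simp
  obtain ⟨t₁, t₂, ht₁neg, ht₂pos, ht₁, ht₂, huniq⟩ :=
    quartic_aux ρ l hρ0 hρ1 hl0 hl1
  refine ⟨t₁/s, t₂/s, div_neg_of_neg_of_pos ht₁neg hs0, div_pos ht₂pos hs0, ?_, ?_, ?_⟩
  · rw [key, mul_div_cancel₀ _ hs0.ne', ht₁, zero_div]
  · rw [key, mul_div_cancel₀ _ hs0.ne', ht₂, zero_div]
  · intro b hb
    rw [key, div_eq_zero_iff] at hb
    rcases hb with hb | hb
    · rcases huniq (s*b) hb with h | h
      · left; rw [eq_div_iff hs0.ne', mul_comm, h]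
      · right; rw [eq_div_iff hs0.ne', mul_comm, h]
    · exact absurd hb hs0.ne'
end

section
/- σ̃_τ²(β₁)/σ̃_δ²(β₁) = S_yy/S_xx holds if and only if β₁ = ±√(S_yy/S_xx), among β₁ with σ̃_δ²(β₁) ≠ 0. -/
/-- `σ̃_τ²(β₁)/σ̃_δ²(β₁) = S_yy/S_xx` if and only if `β₁ = ±√(S_yy/S_xx)`,
among `β₁ ≠ 0` with `σ̃_δ²(β₁) ≠ 0`. -/
theorem ratio_eq_iff_gm
    (n : ℕ) (hn : 1 ≤ n) (Sxx Syy Sxy : ℝ) (hSxx : 0 < Sxx) (hSyy : 0 < Syy)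
    (hSxy : Sxy ≠ 0)
    (σδ2 στ2 : ℝ → ℝ)
    (hσδ2 : ∀ b : ℝ, σδ2 b = Sxx / n - Sxy / (n * b))
    (hστ2 : ∀ b : ℝ, στ2 b = Syy / n - b * Sxy / n) :
    ∀ b : ℝ, b ≠ 0 → σδ2 b ≠ 0 →
      (στ2 b / σδ2 b = Syy / Sxx ↔
        b = Real.sqrt (Syy / Sxx) ∨ b = -Real.sqrt (Syy / Sxx)) := by
  intro b hb hσ
  have hn0 : (n : ℝ) ≠ 0 := by
    exact Nat.cast_ne_zero.mpr (by omega)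
  have hs : Real.sqrt (Syy / Sxx) ^ 2 = Syy / Sxx :=
    Real.sq_sqrt (by positivity)
  set s := Real.sqrt (Syy / Sxx) with hsdef
  rw [div_eq_div_iff hσ hSxx.ne', hσδ2, hστ2]
  constructor
  · intro h
    have hsq : b ^ 2 = s ^ 2 := by
      rw [hs]
      have h2 : Sxy * (Syy - Sxx * b ^ 2) = 0 := by
        have hn2 : (0:ℝ) < n := by positivity
        field_simp at h
        nlinarith [h, mul_pos hn2 hn2]
      rcases mul_eq_zero.mp h2 with h3 | h3
      · exact absurd h3 hSxy
      · field_simp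
        nlinarith [h3]
    have : (b - s) * (b + s) = 0 := by nlinarith [hsq]
    rcases mul_eq_zero.mp this with h4 | h4
    · exact Or.inl (by linarith)
    · exact Or.inr (by linarith)
  · intro h
    have hsq : b ^ 2 = Syy / Sxx := by
      rcases h with h | h <;> rw [h] <;> simpa using hs
    have hbb : Sxx * b ^ 2 = Syy := by
      field_simp at hsq; linarith [hsq]
    field_simp
    linear_combination (-Sxy) * hbb
end

section
/- If κ = S_yy/S_xx then β₁^mle(κ) = √(S_yy/S_xx) = β₁^gm. -/
/-- If `κ = S_yy/S_xx` then `β₁^mle(κ) = √(S_yy/S_xx) = β₁^gm`. -/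
theorem mle_eq_gm
    (Sxx Syy Sxy : ℝ) (hSxx : 0 < Sxx) (hSyy : 0 < Syy)
    (ρ : ℝ) (hρ : ρ = Sxy / Real.sqrt (Sxx * Syy)) (hρpos : 0 < ρ)
    (mle : ℝ → ℝ)
    (hmle : ∀ κ : ℝ, mle κ =
      ((Syy - κ * Sxx) + Real.sqrt ((Syy - κ * Sxx) ^ 2 + 4 * κ * ρ ^ 2 * Sxx * Syy)) /
        (2 * ρ * Real.sqrt (Sxx * Syy))) :
    mle (Syy / Sxx) = Real.sqrt (Syy / Sxx) := by
  have h0 : Syy - (Syy / Sxx) * Sxx = 0 := by field_simp; ring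
  rw [hmle, h0]
  have hκ : Syy / Sxx = Syy / Sxx := rfl
  have harg : (0:ℝ) ^ 2 + 4 * (Syy / Sxx) * ρ ^ 2 * Sxx * Syy
      = (2 * ρ) ^ 2 * ((Syy / Sxx) * (Sxx * Syy)) := by
    field_simp; ring
  rw [harg]
  have h2ρ : (0:ℝ) ≤ 2 * ρ := by linarith
  rw [Real.sqrt_mul (by positivity) _, Real.sqrt_sq h2ρ,
    Real.sqrt_mul (by positivity) (Sxx * Syy)]
  have hs : Real.sqrt (Sxx * Syy) > 0 := Real.sqrt_pos.mpr (by positivity)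
  field_simp
  ring
end

section
/- For every β₁ strictly between β₁^ver = S_xy/S_xx and β₁^hor = S_yy/S_xy, setting κ̃(β₁) = (S_yy − β₁ρ√(S_xxS_yy))/(S_xx − (ρ/β₁)√(S_xxS_yy)), one has β₁^mle(κ̃(β₁)) = β₁. That is, the map β₁ ↦ β₁^mle(κ̃(β₁)) is the identity on (β₁^ver, β₁^hor). -/
/-- For every `β₁` strictly between `β₁^ver = S_xy/S_xx` and
`β₁^hor = S_yy/S_xy`, with `κ̃(β₁) = (S_yy − β₁ρ√(S_xxS_yy))/(S_xx − (ρ/β₁)√(S_xxS_yy))`,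
one has `β₁^mle(κ̃(β₁)) = β₁`. -/
theorem mle_kappa_tilde_identity
    (Sxx Syy Sxy : ℝ) (hSxx : 0 < Sxx) (hSyy : 0 < Syy) (hSxy : 0 < Sxy)
    (ρ : ℝ) (hρ : ρ = Sxy / Real.sqrt (Sxx * Syy)) (hρmem : ρ ∈ Set.Ioo (0 : ℝ) 1)
    (mle κt : ℝ → ℝ)
    (hmle : ∀ κ : ℝ, mle κ =
      ((Syy - κ * Sxx) + Real.sqrt ((Syy - κ * Sxx) ^ 2 + 4 * κ * ρ ^ 2 * Sxx * Syy)) /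
        (2 * ρ * Real.sqrt (Sxx * Syy)))
    (hκt : ∀ b : ℝ, κt b =
      (Syy - b * ρ * Real.sqrt (Sxx * Syy)) /
        (Sxx - (ρ / b) * Real.sqrt (Sxx * Syy))) :
    ∀ b ∈ Set.Ioo (Sxy / Sxx) (Syy / Sxy), mle (κt b) = b := by
  intro b hb
  obtain ⟨hb1, hb2⟩ := hb
  obtain ⟨hρ0, hρ1⟩ := hρmem
  have hs0 : 0 < Sxx * Syy := by positivity
  have hs : 0 < Real.sqrt (Sxx * Syy) := Real.sqrt_pos.mpr hs0
  set s := Real.sqrt (Sxx * Syy) with hsdef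
  have hs2 : s ^ 2 = Sxx * Syy := Real.sq_sqrt hs0.le
  have hρs : ρ * s = Sxy := by rw [hρ]; field_simp
  have hb0 : 0 < b := lt_trans (by positivity) hb1
  have hineq : Sxy ^ 2 < Sxx * Syy := by
    have hlt : Sxy < s := by
      have h1 : Sxy / s < 1 := by rw [← hρ]; exact hρ1
      calc Sxy = (Sxy / s) * s := by field_simp
        _ < 1 * s := mul_lt_mul_of_pos_right h1 hs
        _ = s := one_mul s
    nlinarith [hlt, hSxy, hs]
  have hD : 0 < Sxx - Sxy / b := by
    rw [sub_pos, div_lt_iff₀ hb0]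
    rw [div_lt_iff₀ hSxx] at hb1; linarith
  have hN : 0 < Syy - b * Sxy := by
    rw [lt_div_iff₀ hSxy] at hb2; linarith
  have hκ : κt b = (Syy - b * Sxy) / (Sxx - Sxy / b) := by
    rw [hκt b]
    congr 1
    · rw [mul_assoc, hρs]
    · rw [div_mul_eq_mul_div, hρs]
  set K := (Syy - b * Sxy) / (Sxx - Sxy / b) with hKdef
  have hρ2 : ρ ^ 2 * (Sxx * Syy) = Sxy ^ 2 := by
    rw [← hs2, ← hρs]; ring
  have hbD : 0 < b * Sxx - Sxy := by
    have := mul_pos hb0 hD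
    have hb' : b ≠ 0 := hb0.ne'
    field_simp at this
    linarith [this]
  have hK2 : K = (b * (Syy - b * Sxy)) / (b * Sxx - Sxy) := by
    rw [hKdef, div_eq_div_iff (ne_of_gt hD) (ne_of_gt hbD)]
    field_simp
  have hQ : 0 < b ^ 2 * Sxx - 2 * b * Sxy + Syy := by
    nlinarith [sq_nonneg (b * Sxx - Sxy), hineq, hSxx]
  have key : (2 * b * Sxy - (Syy - K * Sxx)) * (b * (Sxx - Sxy / b)) =
      Sxy * (b ^ 2 * Sxx - 2 * b * Sxy + Syy) := by
    rw [hK2]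
    field_simp [hb0.ne', hbD.ne']
    ring
  have hpos : 0 ≤ 2 * b * Sxy - (Syy - K * Sxx) := by
    nlinarith [mul_pos hb0 hD, mul_pos hSxy hQ, key]
  have hsq : (Syy - K * Sxx) ^ 2 + 4 * K * ρ ^ 2 * Sxx * Syy =
      (2 * b * Sxy - (Syy - K * Sxx)) ^ 2 := by
    have e : 4 * K * ρ ^ 2 * Sxx * Syy = 4 * K * Sxy ^ 2 := by
      rw [← hρ2]; ring
    rw [e, hK2]
    field_simp [hbD.ne']
    ring
  rw [hmle, hκ, hsq, Real.sqrt_sq hpos]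
  have h2s : 2 * ρ * s = 2 * Sxy := by rw [mul_assoc, hρs]
  rw [h2s]
  field_simp
  ring
end

section
/- At the perpendicular estimator β₁^per, the two Madansky moment estimators are equal: σ̃_δ²(β₁^per) = σ̃_τ²(β₁^per) = (S_xx + S_yy − √((S_xx − S_yy)² + 4ρ²S_xxS_yy))/(2n), hence the estimated error ratio κ̃(β₁^per) equals 1. -/
/-- At the perpendicular estimator `β₁^per`, the two Madansky moment
estimators are equal, with common value
`(S_xx + S_yy − √((S_xx − S_yy)² + 4ρ²S_xxS_yy))/(2n)`; hence the estimated error ratio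
`κ̃(β₁^per) = σ̃_τ²(β₁^per)/σ̃_δ²(β₁^per)` equals `1`. -/
theorem madansky_at_per
    (n : ℕ) (hn : 1 ≤ n) (Sxx Syy Sxy : ℝ) (hSxx : 0 < Sxx) (hSyy : 0 < Syy)
    (hSxy : 0 < Sxy) (hρlt : Sxy ^ 2 < Sxx * Syy)
    (ρ2 : ℝ) (hρ2 : ρ2 = Sxy ^ 2 / (Sxx * Syy))
    (σδ2 στ2 : ℝ → ℝ)
    (hσδ2 : ∀ b : ℝ, σδ2 b = Sxx / n - Sxy / (n * b))
    (hστ2 : ∀ b : ℝ, στ2 b = Syy / n - b * Sxy / n)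
    (βper : ℝ)
    (hβper : βper = ((Syy - Sxx) + Real.sqrt ((Syy - Sxx) ^ 2 + 4 * Sxy ^ 2)) / (2 * Sxy)) :
    σδ2 βper = στ2 βper ∧
      στ2 βper =
        (Sxx + Syy - Real.sqrt ((Sxx - Syy) ^ 2 + 4 * ρ2 * Sxx * Syy)) / (2 * n) ∧
      στ2 βper / σδ2 βper = 1 := by
  have hn0 : (0:ℝ) < n := by exact_mod_cast Nat.lt_of_lt_of_le Nat.zero_lt_one hn
  have hnne : (n:ℝ) ≠ 0 := ne_of_gt hn0
  set s := Real.sqrt ((Syy - Sxx) ^ 2 + 4 * Sxy ^ 2) with hs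
  have hDnn : (0:ℝ) ≤ (Syy - Sxx) ^ 2 + 4 * Sxy ^ 2 := by positivity
  have hs0 : 0 ≤ s := Real.sqrt_nonneg _
  have hs2 : s ^ 2 = (Syy - Sxx) ^ 2 + 4 * Sxy ^ 2 := Real.sq_sqrt hDnn
  have hbpos : 0 < βper := by
    rw [hβper]
    have h1 : Sxx - Syy < s := by nlinarith [sq_nonneg (s - (Sxx - Syy))]
    apply div_pos (by linarith) (by positivity)
  have hbne : βper ≠ 0 := ne_of_gt hbpos
  -- key quadratic relation
  have hkey : Sxy * βper ^ 2 + (Sxx - Syy) * βper - Sxy = 0 := by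
    have : βper * (2 * Sxy) = (Syy - Sxx) + s := by
      rw [hβper]; field_simp
    nlinarith [hs2, this]
  have heq1 : σδ2 βper = στ2 βper := by
    rw [hσδ2, hστ2]
    field_simp
    linear_combination hkey
  -- second sqrt equals s
  have hsqeq : Real.sqrt ((Sxx - Syy) ^ 2 + 4 * ρ2 * Sxx * Syy) = s := by
    rw [hs]
    congr 1
    rw [hρ2]
    field_simp
    ring
  have hbS : βper * Sxy = ((Syy - Sxx) + s) / 2 := by
    rw [hβper]; field_simp
  have heq2 : στ2 βper = (Sxx + Syy - Real.sqrt ((Sxx - Syy) ^ 2 + 4 * ρ2 * Sxx * Syy)) / (2 * n) := by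
    rw [hστ2, hsqeq]
    rw [div_sub_div _ _ hnne hnne]  -- not strictly needed; fallback to field_simp
    field_simp
    nlinarith [hbS]
  refine ⟨heq1, heq2, ?_⟩
  have hpos : 0 < στ2 βper := by
    rw [heq2, hsqeq]
    have hlt : s < Sxx + Syy := by nlinarith [hs2, sq_nonneg (Sxx + Syy - s)]
    have : 0 < Sxx + Syy - s := by linarith
    positivity
  rw [heq1, div_self (ne_of_gt hpos)]
end

section
/- For κ > 0 and ρ ∈ (0,1], the MLE slope β₁^mle(κ) = [(S_yy − κS_xx) + √((S_yy − κS_xx)² + 4κρ²S_xxS_yy)]/(2ρ√(S_xxS_yy)) is positive and strictly decreasing in κ, with limit β₁^hor = S_yy/S_xy as κ → 0⁺ and limit β₁^ver = S_xy/S_xx as κ → ∞ (for ρ < 1). -/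
open Filter Topology

/-- For `κ > 0` and `ρ ∈ (0,1)`, the MLE slope `β₁^mle(κ)` is positive and
strictly decreasing in `κ`, with limit `β₁^hor = S_yy/S_xy` as `κ → 0⁺` and limit
`β₁^ver = S_xy/S_xx` as `κ → ∞`. -/
theorem mle_monotone_limits
    (Sxx Syy Sxy : ℝ) (hSxx : 0 < Sxx) (hSyy : 0 < Syy) (hSxy : 0 < Sxy)
    (ρ : ℝ) (hρ : ρ = Sxy / Real.sqrt (Sxx * Syy)) (hρmem : ρ ∈ Set.Ioo (0 : ℝ) 1)
    (mle : ℝ → ℝ)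
    (hmle : ∀ κ : ℝ, mle κ =
      ((Syy - κ * Sxx) + Real.sqrt ((Syy - κ * Sxx) ^ 2 + 4 * κ * ρ ^ 2 * Sxx * Syy)) /
        (2 * ρ * Real.sqrt (Sxx * Syy))) :
    (∀ κ : ℝ, 0 < κ → 0 < mle κ) ∧
      StrictAntiOn mle (Set.Ioi 0) ∧
      Tendsto mle (nhdsWithin 0 (Set.Ioi 0)) (nhds (Syy / Sxy)) ∧
      Tendsto mle atTop (nhds (Sxy / Sxx)) := by
  obtain ⟨hρ0, hρ1⟩ := hρmem
  have hab : 0 < Sxx * Syy := mul_pos hSxx hSyy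
  have hs : 0 < Real.sqrt (Sxx * Syy) := Real.sqrt_pos.2 hab
  have hρS : ρ * Real.sqrt (Sxx * Syy) = Sxy := by
    rw [hρ]; field_simp
  have hsq : Real.sqrt (Sxx*Syy) ^ 2 = Sxx*Syy := Real.sq_sqrt hab.le
  have hρ2 : ρ^2 * (Sxx*Syy) = Sxy^2 := by
    rw [← hsq, ← mul_pow, hρS]
  have hρ2lt : ρ^2 < 1 := by nlinarith
  have hc2 : Sxy^2 < Sxx*Syy := by nlinarith [mul_lt_mul_of_pos_right hρ2lt hab]
  have hmle' : ∀ κ, mle κ = ((Syy - κ * Sxx) +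
      Real.sqrt ((Syy - κ*Sxx)^2 + 4*κ*Sxy^2)) / (2 * Sxy) := by
    intro κ; rw [hmle]
    have h1 : (Syy - κ*Sxx)^2 + 4*κ*ρ^2*Sxx*Syy = (Syy - κ*Sxx)^2 + 4*κ*Sxy^2 := by
      linear_combination 4*κ*hρ2
    rw [h1, show (2:ℝ)*ρ*Real.sqrt (Sxx*Syy) = 2*Sxy by rw [mul_assoc, hρS]]
  -- basic facts about R κ := sqrt ((Syy - κ Sxx)^2 + 4 κ Sxy^2)
  have hrad : ∀ κ : ℝ, 0 < κ → 0 < (Syy - κ*Sxx)^2 + 4*κ*Sxy^2 := by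
    intro κ hκ; positivity
  have hR2 : ∀ κ : ℝ, 0 < κ →
      Real.sqrt ((Syy - κ*Sxx)^2 + 4*κ*Sxy^2) ^ 2 = (Syy - κ*Sxx)^2 + 4*κ*Sxy^2 := by
    intro κ hκ; exact Real.sq_sqrt (hrad κ hκ).le
  have hRpos : ∀ κ : ℝ, 0 < κ → 0 < Real.sqrt ((Syy - κ*Sxx)^2 + 4*κ*Sxy^2) := by
    intro κ hκ; exact Real.sqrt_pos.2 (hrad κ hκ)
  -- numerator positivity
  have hnum : ∀ κ : ℝ, 0 < κ →
      0 < (Syy - κ*Sxx) + Real.sqrt ((Syy - κ*Sxx)^2 + 4*κ*Sxy^2) := by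
    intro κ hκ
    nlinarith [hR2 κ hκ, hRpos κ hκ, mul_pos hκ (mul_pos hSxy hSxy)]
  have hpos : ∀ κ : ℝ, 0 < κ → 0 < mle κ := by
    intro κ hκ
    rw [hmle' κ]
    exact div_pos (hnum κ hκ) (by positivity)
  -- key inequality: 2 Sxy^2 - Sxx * D κ < Sxx * R κ for κ > 0
  have hkey : ∀ κ : ℝ, 0 < κ →
      2*Sxy^2 - Sxx*(Syy - κ*Sxx) < Sxx * Real.sqrt ((Syy - κ*Sxx)^2 + 4*κ*Sxy^2) := by
    intro κ hκ
    rcases le_or_gt (2*Sxy^2 - Sxx*(Syy - κ*Sxx)) 0 with h | h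
    · exact h.trans_lt (mul_pos hSxx (hRpos κ hκ))
    · have h2 : (2*Sxy^2 - Sxx*(Syy - κ*Sxx))^2
          < (Sxx * Real.sqrt ((Syy - κ*Sxx)^2 + 4*κ*Sxy^2))^2 := by
        nlinarith [hR2 κ hκ, mul_pos (mul_pos hSxy hSxy) (sub_pos.2 hc2)]
      exact lt_of_pow_lt_pow_left₀ 2 (by positivity) h2
  have hanti : StrictAntiOn mle (Set.Ioi 0) := by
    intro κ1 hκ1 κ2 hκ2 h12
    simp only [Set.mem_Ioi] at hκ1 hκ2
    rw [hmle' κ1, hmle' κ2, div_lt_div_iff_of_pos_right (by positivity)]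
    set R1 := Real.sqrt ((Syy - κ1*Sxx)^2 + 4*κ1*Sxy^2) with hR1def
    have hM : 0 < (κ2 - κ1)*Sxx + R1 := by
      have := hRpos κ1 hκ1; nlinarith
    have hx : Real.sqrt ((Syy - κ2*Sxx)^2 + 4*κ2*Sxy^2) < (κ2 - κ1)*Sxx + R1 := by
      rw [show Real.sqrt ((Syy - κ2*Sxx)^2 + 4*κ2*Sxy^2)
            < (κ2 - κ1)*Sxx + R1 ↔ (Syy - κ2*Sxx)^2 + 4*κ2*Sxy^2 < ((κ2 - κ1)*Sxx + R1)^2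
          from Real.sqrt_lt' hM]
      nlinarith [hR2 κ1 hκ1, mul_lt_mul_of_pos_left (hkey κ1 hκ1) (by linarith : (0:ℝ) < 2*(κ2 - κ1))]
    nlinarith [hx]
  refine ⟨hpos, hanti, ?_, ?_⟩
  · -- limit at 0+
    have hcont : Tendsto (fun κ : ℝ => ((Syy - κ * Sxx) +
        Real.sqrt ((Syy - κ*Sxx)^2 + 4*κ*Sxy^2)) / (2 * Sxy)) (nhds 0) (nhds (Syy / Sxy)) := by
      have : ContinuousAt (fun κ : ℝ => ((Syy - κ * Sxx) +
          Real.sqrt ((Syy - κ*Sxx)^2 + 4*κ*Sxy^2)) / (2 * Sxy)) 0 := by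
        fun_prop (disch := positivity)
      have h0 : (Syy + Real.sqrt (Syy ^ 2)) / (2 * Sxy) = Syy / Sxy := by
        rw [Real.sqrt_sq hSyy.le]; field_simp; ring
      simpa [h0] using this.tendsto
    exact Tendsto.congr' (by filter_upwards with κ using (hmle' κ).symm)
      (hcont.mono_left (nhdsWithin_le_nhds (s := Set.Ioi (0:ℝ))))
  · -- limit at infinity
    have hg : Tendsto (fun κ : ℝ => 2*Sxy /
        (Real.sqrt ((Syy/κ - Sxx)^2 + 4*Sxy^2/κ) + Sxx - Syy/κ)) atTop (nhds (Sxy/Sxx)) := by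
      have h1 : Tendsto (fun κ : ℝ => Syy/κ) atTop (nhds 0) :=
        Tendsto.div_atTop tendsto_const_nhds tendsto_id
      have h2 : Tendsto (fun κ : ℝ => 4*Sxy^2/κ) atTop (nhds 0) :=
        Tendsto.div_atTop tendsto_const_nhds tendsto_id
      have h3 : Tendsto (fun κ : ℝ => Real.sqrt ((Syy/κ - Sxx)^2 + 4*Sxy^2/κ) + Sxx - Syy/κ)
          atTop (nhds (2*Sxx)) := by
        have : Tendsto (fun κ : ℝ => (Syy/κ - Sxx)^2 + 4*Sxy^2/κ) atTop (nhds (Sxx^2)) := by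
          have := ((h1.sub_const Sxx).pow 2).add h2
          simpa using this
        have hsqrt := this.sqrt
        rw [Real.sqrt_sq hSxx.le] at hsqrt
        have := (hsqrt.add_const Sxx).sub h1
        simpa [two_mul] using this
      have := Tendsto.div (tendsto_const_nhds (x := 2*Sxy)) h3 (by positivity)
      convert this using 2
      · rfl
      field_simp
    apply hg.congr'
    filter_upwards [eventually_gt_atTop 0] with κ hκ
    rw [hmle' κ]
    have hR2' := hR2 κ hκ
    have hRpos' := hRpos κ hκ
    obtain ⟨R, hRdef⟩ : ∃ R : ℝ, R = Real.sqrt ((Syy - κ*Sxx)^2 + 4*κ*Sxy^2) := ⟨_, rfl⟩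
    rw [← hRdef] at hR2' hRpos' ⊢
    have hSR : Real.sqrt ((Syy/κ - Sxx)^2 + 4*Sxy^2/κ) = R / κ := by
      rw [hRdef, eq_div_iff hκ.ne', ← Real.sqrt_sq hκ.le, ← Real.sqrt_mul (by positivity)]
      congr 1; field_simp; ring
      rw [Real.sq_sqrt (by positivity)]
    rw [hSR]
    have h4 : 0 < 4*κ*Sxy^2 := by positivity
    have hRD : 0 < R - (Syy - κ*Sxx) := by
      rcases le_or_gt (Syy - κ*Sxx) 0 with h|h
      · linarith
      · have h2 : (Syy - κ*Sxx)^2 < R^2 := by linarith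
        have := lt_of_pow_lt_pow_left₀ 2 hRpos'.le h2
        linarith
    have hden : R / κ + Sxx - Syy/κ = (R - (Syy - κ*Sxx))/κ := by field_simp; ring
    rw [hden, div_div_eq_mul_div, div_eq_div_iff (by linarith) (by positivity)]
    linear_combination -hR2'
end

section
/- For λ ∈ (0,1) and S_xy > 0, the positive root β₁(λ) of P₄ lies in the closed interval [β₁^ver, β₁^hor] = [S_xy/S_xx, S_yy/S_xy]; equivalently, P₄(β₁^ver) ≤ 0 ≤ P₄(β₁^hor) for all λ ∈ (0,1) when ρ < 1. -/
/-- For `λ ∈ (0,1)` and `S_xy > 0` with `ρ < 1`, every positive root of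
`P₄` lies in the closed interval `[β₁^ver, β₁^hor] = [S_xy/S_xx, S_yy/S_xy]`;
equivalently, `P₄(β₁^ver) ≤ 0 ≤ P₄(β₁^hor)`. -/
theorem positive_root_in_interval
    (Sxx Syy Sxy : ℝ) (hSxx : 0 < Sxx) (hSyy : 0 < Syy) (hSxy : 0 < Sxy)
    (ρ : ℝ) (hρ : ρ = Sxy / Real.sqrt (Sxx * Syy)) (hρ1 : ρ < 1)
    (P₄ : ℝ → ℝ → ℝ)
    (hP₄ : ∀ l b : ℝ, P₄ l b =
      l ^ 2 * Real.sqrt (Sxx / Syy) * (Sxx / Syy) * b ^ 4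
        - l ^ 2 * (Sxx / Syy) * ρ * b ^ 3
        + (1 - l) ^ 2 * ρ * b
        - (1 - l) ^ 2 * Real.sqrt (Syy / Sxx)) :
    ∀ l ∈ Set.Ioo (0 : ℝ) 1,
      (∀ b : ℝ, 0 < b → P₄ l b = 0 → b ∈ Set.Icc (Sxy / Sxx) (Syy / Sxy)) ∧
        P₄ l (Sxy / Sxx) ≤ 0 ∧ 0 ≤ P₄ l (Syy / Sxy) := by
  intro l hl
  obtain ⟨hl0, hl1⟩ := hl
  set c := Real.sqrt Sxx with hc
  set d := Real.sqrt Syy with hd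
  have hc0 : 0 < c := Real.sqrt_pos.mpr hSxx
  have hd0 : 0 < d := Real.sqrt_pos.mpr hSyy
  have hc2 : c ^ 2 = Sxx := Real.sq_sqrt hSxx.le
  have hd2 : d ^ 2 = Syy := Real.sq_sqrt hSyy.le
  have hs1 : Real.sqrt (Sxx / Syy) = c / d := Real.sqrt_div hSxx.le _
  have hs2 : Real.sqrt (Syy / Sxx) = d / c := Real.sqrt_div hSyy.le _
  have hscd : Real.sqrt (Sxx * Syy) = c * d := Real.sqrt_mul hSxx.le _
  have hρ' : ρ = Sxy / (c * d) := by rw [hρ, hscd]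
  have hρ0 : 0 < ρ := by rw [hρ']; positivity
  have hcd : Sxy < c * d := by
    have h := hρ1
    rw [hρ'] at h
    exact (div_lt_one (by positivity)).mp h
  have hvh : Sxy / Sxx < Syy / Sxy := by
    rw [div_lt_div_iff₀ hSxx hSxy]
    nlinarith [sq_nonneg (c * d)]
  have hkey : ∀ b : ℝ, P₄ l b =
      l ^ 2 * (Sxx / Syy) * b ^ 3 * (c / d) * (b - Sxy / Sxx)
        + (1 - l) ^ 2 * (Sxy / (c * d)) * (b - Syy / Sxy) := by
    intro b
    rw [hP₄, hs1, hs2, hρ', ← hc2, ← hd2]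
    field_simp
    ring
  have hl1' : 0 < 1 - l := by linarith
  refine ⟨?_, ?_, ?_⟩
  · intro b hb hroot
    rw [hkey b] at hroot
    constructor
    · by_contra hlt
      push_neg at hlt
      have h1 : l ^ 2 * (Sxx / Syy) * b ^ 3 * (c / d) * (b - Sxy / Sxx) < 0 := by
        apply mul_neg_of_pos_of_neg (by positivity)
        linarith
      have h2 : (1 - l) ^ 2 * (Sxy / (c * d)) * (b - Syy / Sxy) < 0 := by
        apply mul_neg_of_pos_of_neg (by positivity)
        linarith
      linarith
    · by_contra hlt
      push_neg at hlt
      have h1 : 0 < l ^ 2 * (Sxx / Syy) * b ^ 3 * (c / d) * (b - Sxy / Sxx) := by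
        apply mul_pos (by positivity)
        linarith
      have h2 : 0 < (1 - l) ^ 2 * (Sxy / (c * d)) * (b - Syy / Sxy) := by
        apply mul_pos (by positivity)
        linarith
      linarith
  · rw [hkey]
    have h1 : (Sxy / Sxx - Sxy / Sxx) = 0 := by ring
    rw [h1, mul_zero, zero_add]
    apply mul_nonpos_of_nonneg_of_nonpos (by positivity)
    linarith
  · rw [hkey]
    have h1 : (Syy / Sxy - Syy / Sxy) = 0 := by ring
    rw [h1, mul_zero, add_zero]
    apply mul_nonneg (by positivity)
    linarith
end
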